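/- arXiv:0907.0537 — 3 statements merged into one kernel-verified Lean document; each statement's English description precedes it below -/
import Mathlib

section
/- For all N ≥ 2 and all integers k with 1 ≤ k ≤ N/2, one has (1 - π²/12) k² ≤ sin²(kπ/N)/sin²(π/N) ≤ k² / (1 - π²/(3N²)). -/
lemma sub_cube_le_sin {y : ℝ} (hy : 0 ≤ y) : y - y ^ 3 / 6 ≤ Real.sin y := by
  have key : MonotoneOn (fun t => Real.sin t - t + t ^ 3 / 6) (Set.Icc 0 y) := by
    apply monotoneOn_of_deriv_nonneg (convex_Icc _ _)
    · exact (Continuous.continuousOn (by continuity))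
    · exact (Differentiable.differentiableOn (by fun_prop))
    · intro t ht
      have hd : HasDerivAt (fun t => Real.sin t - t + t ^ 3 / 6)
          (Real.cos t - 1 + 3 * t ^ 2 / 6) t := by
        have := ((Real.hasDerivAt_sin t).sub (hasDerivAt_id t)).add
          ((hasDerivAt_pow 3 t).div_const 6)
        exact this.congr_deriv (by norm_num)
      rw [hd.deriv]
      have := Real.one_sub_sq_div_two_le_cos (x := t)
      nlinarith
  have h0 : (0:ℝ) ∈ Set.Icc 0 y := ⟨le_refl _, hy⟩
  have h1 : y ∈ Set.Icc (0:ℝ) y := ⟨hy, le_refl _⟩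
  have := key h0 h1 hy
  simp at this
  linarith

set_option maxHeartbeats 1000000 in
/-- For all `N ≥ 2` and integers `1 ≤ k ≤ N/2`,
`(1 - π²/12) k² ≤ sin²(kπ/N)/sin²(π/N) ≤ k² / (1 - π²/(3N²))`. -/
theorem eigenvalue_ratio_bounds (N k : ℕ) (hN : 2 ≤ N) (hk : 1 ≤ k)
    (hkN : (k : ℝ) ≤ N / 2) :
    (1 - Real.pi ^ 2 / 12) * (k : ℝ) ^ 2
      ≤ Real.sin (k * Real.pi / N) ^ 2 / Real.sin (Real.pi / N) ^ 2 ∧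
    Real.sin (k * Real.pi / N) ^ 2 / Real.sin (Real.pi / N) ^ 2
      ≤ (k : ℝ) ^ 2 / (1 - Real.pi ^ 2 / (3 * (N : ℝ) ^ 2)) := by
  have hπ := Real.pi_pos
  have hπ315 := Real.pi_lt_d2
  have hN2 : (2:ℝ) ≤ N := by exact_mod_cast hN
  have hNpos : (0:ℝ) < N := by linarith
  have hk1 : (1:ℝ) ≤ (k:ℝ) := by exact_mod_cast hk
  set y := Real.pi / (N:ℝ) with hy_def
  clear_value y
  have hy : 0 < y := by rw [hy_def]; positivity
  have hy2 : y ≤ Real.pi / 2 := by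
    rw [hy_def, div_le_div_iff₀ hNpos two_pos]
    nlinarith
  have hx_eq : (k:ℝ) * Real.pi / N = (k:ℝ) * y := by rw [hy_def]; ring
  have hxpos : 0 < (k:ℝ) * y := by positivity
  have hx2 : (k:ℝ) * y ≤ Real.pi / 2 := by
    rw [hy_def, mul_div_assoc', div_le_div_iff₀ hNpos two_pos]
    nlinarith
  have hylt : y < Real.pi := by linarith
  have hsy_pos : 0 < Real.sin y := Real.sin_pos_of_pos_of_lt_pi hy hylt
  have hsy_le : Real.sin y ≤ y := (Real.sin_lt hy).le
  have hsy_ge : y - y ^ 3 / 6 ≤ Real.sin y := sub_cube_le_sin hy.le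
  have hsx_ge : 2 / Real.pi * ((k:ℝ) * y) ≤ Real.sin ((k:ℝ) * y) :=
    Real.mul_le_sin hxpos.le hx2
  have hsx_le : Real.sin ((k:ℝ) * y) ≤ (k:ℝ) * y := (Real.sin_lt hxpos).le
  have hsx_pos : 0 < Real.sin ((k:ℝ) * y) := lt_of_lt_of_le (by positivity) hsx_ge
  rw [hx_eq]
  have hden_pos : 0 < 1 - Real.pi ^ 2 / (3 * (N:ℝ) ^ 2) := by
    have h1 : Real.pi ^ 2 / (3 * (N:ℝ) ^ 2) < 1 := by
      rw [div_lt_one (by positivity)]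
      nlinarith
    linarith
  have hy_sq : y ^ 2 = Real.pi ^ 2 / (N:ℝ) ^ 2 := by
    rw [hy_def, div_pow]
  constructor
  · -- lower bound
    have key1 : (2 / Real.pi * ((k:ℝ) * y)) ^ 2 / y ^ 2
        ≤ Real.sin ((k:ℝ) * y) ^ 2 / Real.sin y ^ 2 := by
      apply div_le_div₀ (sq_nonneg _)
        (pow_le_pow_left₀ (by positivity) hsx_ge 2)
        (by positivity)
        (pow_le_pow_left₀ hsy_pos.le hsy_le 2)
    have heq : (2 / Real.pi * ((k:ℝ) * y)) ^ 2 / y ^ 2 = 4 * (k:ℝ) ^ 2 / Real.pi ^ 2 := by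
      field_simp
      ring
    rw [heq] at key1
    have h12 : (1 - Real.pi ^ 2 / 12) * (k:ℝ) ^ 2 ≤ 4 * (k:ℝ) ^ 2 / Real.pi ^ 2 := by
      rw [le_div_iff₀ (by positivity)]
      nlinarith [sq_nonneg (Real.pi ^ 2 - 6), sq_nonneg (k:ℝ), sq_nonneg ((k:ℝ) * (Real.pi^2 - 6))]
    linarith
  · -- upper bound
    have hden : y ^ 2 * (1 - Real.pi ^ 2 / (3 * (N:ℝ) ^ 2)) ≤ Real.sin y ^ 2 := by
      have hys : y ^ 2 ≤ 6 := by nlinarith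
      have hnn : 0 ≤ y - y ^ 3 / 6 := by
        nlinarith [mul_nonneg hy.le (sub_nonneg.2 hys)]
      have h1 : (y - y ^ 3 / 6) ^ 2 ≤ Real.sin y ^ 2 :=
        pow_le_pow_left₀ hnn hsy_ge 2
      have h3 : Real.pi ^ 2 / (3 * (N:ℝ) ^ 2) = y ^ 2 / 3 := by
        rw [hy_sq, div_div, mul_comm]
      have h2 : y ^ 2 * (1 - y ^ 2 / 3) ≤ (y - y ^ 3 / 6) ^ 2 := by
        have h6 : (0:ℝ) ≤ y ^ 6 / 36 := by positivity
        nlinarith [h6]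
      rw [h3]
      linarith
    have key2 : Real.sin ((k:ℝ) * y) ^ 2 / Real.sin y ^ 2
        ≤ ((k:ℝ) * y) ^ 2 / (y ^ 2 * (1 - Real.pi ^ 2 / (3 * (N:ℝ) ^ 2))) := by
      apply div_le_div₀ (sq_nonneg _)
        (pow_le_pow_left₀ hsx_pos.le hsx_le 2)
        (by positivity)
        hden
    have heq : ((k:ℝ) * y) ^ 2 / (y ^ 2 * (1 - Real.pi ^ 2 / (3 * (N:ℝ) ^ 2)))
        = (k:ℝ) ^ 2 / (1 - Real.pi ^ 2 / (3 * (N:ℝ) ^ 2)) := by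
      rw [mul_pow, mul_comm (y ^ 2) (1 - Real.pi ^ 2 / (3 * (N:ℝ) ^ 2)),
        mul_div_mul_right _ _ (pow_ne_zero 2 hy.ne')]
    rw [heq] at key2
    exact key2
end

section
/- For all N ≥ 2 and all integers k with 1 ≤ k ≤ N/2, one has -k⁴π²/(3N²) ≤ sin²(kπ/N)/sin²(π/N) - k² ≤ k²π²/N². -/
lemma aux_cubic_le_sin {x : ℝ} (hx : 0 ≤ x) : x - x ^ 3 / 6 ≤ Real.sin x := by
  have hd : ∀ y : ℝ, HasDerivAt (fun y => Real.sin y - y + y ^ 3 / 6)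
      (Real.cos y - 1 + y ^ 2 / 2) y := by
    intro y
    have h1 := ((Real.hasDerivAt_sin y).sub (hasDerivAt_id y)).add
      ((hasDerivAt_pow 3 y).div_const 6)
    refine h1.congr_deriv ?_
    push_cast
    ring
  have hmono : Monotone (fun y => Real.sin y - y + y ^ 3 / 6) := by
    apply monotone_of_deriv_nonneg
    · exact fun y => (hd y).differentiableAt
    · intro y
      rw [(hd y).deriv]
      have := Real.one_sub_sq_div_two_le_cos (x := y)
      linarith
  have h0 := hmono hx
  simp at h0
  linarith

lemma aux_abs_sin_nat_mul (n : ℕ) (x : ℝ) : |Real.sin (n * x)| ≤ n * |Real.sin x| := by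
  induction n with
  | zero => simp
  | succ m ih =>
    have he : ((m + 1 : ℕ) : ℝ) * x = m * x + x := by push_cast; ring
    rw [he, Real.sin_add]
    calc |Real.sin (m * x) * Real.cos x + Real.cos (m * x) * Real.sin x|
        ≤ |Real.sin (m * x) * Real.cos x| + |Real.cos (m * x) * Real.sin x| := abs_add_le _ _
      _ ≤ |Real.sin (m * x)| * 1 + 1 * |Real.sin x| := by
          rw [abs_mul, abs_mul]
          gcongr
          · exact Real.abs_cos_le_one x
          · exact Real.abs_cos_le_one _
      _ ≤ (m + 1 : ℕ) * |Real.sin x| := by push_cast; nlinarith [abs_nonneg (Real.sin x)]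

lemma aux_lower (K θ : ℝ) (hK0 : 0 < K) (hθ0 : 0 < θ)
    (hkθ : K * θ ≤ Real.pi / 2) (hs : 0 < Real.sin θ) (hsle : Real.sin θ ≤ θ) :
    K ^ 2 - K ^ 4 * θ ^ 2 / 3 ≤ Real.sin (K * θ) ^ 2 / Real.sin θ ^ 2 := by
  have hπ4 : Real.pi < 3.15 := Real.pi_lt_d2
  have hπ0 := Real.pi_pos
  have hKθ0 : 0 < K * θ := by positivity
  have hkθ1 : (K * θ) ^ 2 ≤ 2.49 := by nlinarith
  have hcub := aux_cubic_le_sin (x := K * θ) hKθ0.le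
  have heq : K * θ - (K * θ) ^ 3 / 6 = K * θ * (1 - (K * θ) ^ 2 / 6) := by ring
  rw [heq] at hcub
  have hpos : 0 ≤ K * θ * (1 - (K * θ) ^ 2 / 6) := by nlinarith
  have hsq : (K * θ) ^ 2 * (1 - (K * θ) ^ 2 / 3) ≤ Real.sin (K * θ) ^ 2 := by
    nlinarith [sq_nonneg ((K * θ) ^ 2)]
  have hcoef : 0 ≤ 1 - (K * θ) ^ 2 / 3 := by nlinarith
  have hsθ2 : Real.sin θ ^ 2 ≤ θ ^ 2 := by nlinarith
  have hnum : (K ^ 2 - K ^ 4 * θ ^ 2 / 3) * Real.sin θ ^ 2 ≤ Real.sin (K * θ) ^ 2 := by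
    calc (K ^ 2 - K ^ 4 * θ ^ 2 / 3) * Real.sin θ ^ 2
        = K ^ 2 * (1 - (K * θ) ^ 2 / 3) * Real.sin θ ^ 2 := by ring
      _ ≤ K ^ 2 * (1 - (K * θ) ^ 2 / 3) * θ ^ 2 := by
          have h2 : 0 ≤ K ^ 2 * (1 - (K * θ) ^ 2 / 3) := by positivity
          exact mul_le_mul_of_nonneg_left hsθ2 h2
      _ = (K * θ) ^ 2 * (1 - (K * θ) ^ 2 / 3) := by ring
      _ ≤ _ := hsq
  rw [le_div_iff₀ (by positivity)]
  exact hnum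

/-- For all `N ≥ 2` and integers `1 ≤ k ≤ N/2`,
`-k⁴π²/(3N²) ≤ sin²(kπ/N)/sin²(π/N) - k² ≤ k²π²/N²`. -/
theorem eigenvalue_ratio_error_bounds (N k : ℕ) (hN : 2 ≤ N) (hk : 1 ≤ k)
    (hkN : (k : ℝ) ≤ N / 2) :
    -((k : ℝ) ^ 4 * Real.pi ^ 2 / (3 * (N : ℝ) ^ 2))
      ≤ Real.sin (k * Real.pi / N) ^ 2 / Real.sin (Real.pi / N) ^ 2 - (k : ℝ) ^ 2 ∧
    Real.sin (k * Real.pi / N) ^ 2 / Real.sin (Real.pi / N) ^ 2 - (k : ℝ) ^ 2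
      ≤ (k : ℝ) ^ 2 * Real.pi ^ 2 / (N : ℝ) ^ 2 := by
  have hπ := Real.pi_pos
  have hN0 : (0 : ℝ) < N := by positivity
  have hN2 : (2 : ℝ) ≤ N := by exact_mod_cast hN
  have hk0 : (0 : ℝ) < k := by exact_mod_cast hk
  have hθ0 : 0 < Real.pi / N := by positivity
  have hθπ : Real.pi / N < Real.pi := by
    rw [div_lt_iff₀ hN0]; nlinarith
  have hsθ : 0 < Real.sin (Real.pi / N) := Real.sin_pos_of_pos_of_lt_pi hθ0 hθπ
  have hsθle : Real.sin (Real.pi / N) ≤ Real.pi / N := (Real.sin_lt hθ0).le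
  have ht : (k : ℝ) * Real.pi / N = (k : ℝ) * (Real.pi / N) := by ring
  have hkθ : (k : ℝ) * (Real.pi / N) ≤ Real.pi / 2 := by
    have h1 : (k : ℝ) * (Real.pi / N) ≤ (N / 2) * (Real.pi / N) :=
      mul_le_mul_of_nonneg_right hkN hθ0.le
    have h2 : ((N : ℝ) / 2) * (Real.pi / N) = Real.pi / 2 := by
      field_simp
    linarith [h2 ▸ h1]
  rw [ht]
  have hsθ2 : 0 < Real.sin (Real.pi / N) ^ 2 := by positivity
  constructor
  · have hlow := aux_lower k (Real.pi / N) hk0 hθ0 hkθ hsθ hsθle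
    have hexp : (k : ℝ) ^ 2 - (k : ℝ) ^ 4 * (Real.pi / N) ^ 2 / 3
        = (k : ℝ) ^ 2 - (k : ℝ) ^ 4 * Real.pi ^ 2 / (3 * (N : ℝ) ^ 2) := by
      field_simp
    rw [hexp] at hlow
    linarith
  · have hub : Real.sin ((k : ℝ) * (Real.pi / N)) ^ 2
        ≤ (k : ℝ) ^ 2 * Real.sin (Real.pi / N) ^ 2 := by
      have h := aux_abs_sin_nat_mul k (Real.pi / N)
      rw [abs_of_pos hsθ] at h
      nlinarith [abs_nonneg (Real.sin ((k : ℝ) * (Real.pi / N))),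
        sq_abs (Real.sin ((k : ℝ) * (Real.pi / N)))]
    have hle : Real.sin ((k : ℝ) * (Real.pi / N)) ^ 2 / Real.sin (Real.pi / N) ^ 2
        ≤ (k : ℝ) ^ 2 := by
      rw [div_le_iff₀ hsθ2]; linarith
    have hnn : 0 ≤ (k : ℝ) ^ 2 * Real.pi ^ 2 / (N : ℝ) ^ 2 := by positivity
    linarith
end

section
/- Let μ > 1, N ≥ 2, and for 1 ≤ k ≤ N/2 set u_k^N = 3/(2 + μ sin²(kπ/N)/sin²(π/N)) and v_k = 3/(2 + μk²). Then there exists a constant C depending only on μ such that for all N ≥ 2 and all 1 ≤ k ≤ N/2, |v_k - u_k^N|/(1 - v_k) ≤ C/N². -/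
open Real

/-- `|sin (n x)| ≤ n * sin x` when `sin x ≥ 0`. -/
lemma aux_sin_nat_mul_le (x : ℝ) (hx : 0 ≤ Real.sin x) :
    ∀ n : ℕ, |Real.sin (n * x)| ≤ n * Real.sin x := by
  intro n
  induction n with
  | zero => simp
  | succ n ih =>
    have h1 : Real.sin ((n + 1 : ℕ) * x) = Real.sin (n * x) * Real.cos x
        + Real.cos (n * x) * Real.sin x := by
      push_cast
      rw [add_mul, one_mul, Real.sin_add]
    have e1 : |Real.sin (n * x)| * |Real.cos x| ≤ (n * Real.sin x) * 1 :=
      mul_le_mul ih (Real.abs_cos_le_one x) (abs_nonneg _)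
        (mul_nonneg (Nat.cast_nonneg n) hx)
    have e2 : |Real.cos (n * x)| * |Real.sin x| ≤ 1 * Real.sin x := by
      rw [abs_of_nonneg hx]
      exact mul_le_mul_of_nonneg_right (Real.abs_cos_le_one _) hx
    rw [h1]
    push_cast
    calc |Real.sin (n * x) * Real.cos x + Real.cos (n * x) * Real.sin x|
        ≤ |Real.sin (n * x) * Real.cos x| + |Real.cos (n * x) * Real.sin x| := abs_add_le _ _
      _ = |Real.sin (n * x)| * |Real.cos x| + |Real.cos (n * x)| * |Real.sin x| := by
          rw [abs_mul, abs_mul]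
      _ ≤ (n * Real.sin x) * 1 + 1 * Real.sin x := add_le_add e1 e2
      _ = (n + 1) * Real.sin x := by ring

/-- cubic defect bound: `n sin x - sin (n x) ≤ n³ x³` for `x ≥ 0`. -/
lemma aux_defect (x : ℝ) (hx : 0 ≤ x) :
    ∀ n : ℕ, (n : ℝ) * Real.sin x - Real.sin (n * x) ≤ (n : ℝ) ^ 3 * x ^ 3 := by
  intro n
  induction n with
  | zero => simp
  | succ n ih =>
    have h1 : Real.sin ((n + 1 : ℕ) * x) = Real.sin (n * x) * Real.cos x
        + Real.cos (n * x) * Real.sin x := by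
      push_cast
      rw [add_mul, one_mul, Real.sin_add]
    have hnx : (0:ℝ) ≤ n * x := by positivity
    have hsle : Real.sin (n * x) ≤ n * x := Real.sin_le hnx
    have hsx : Real.sin x ≤ x := Real.sin_le hx
    have hc1 : 1 - x ^ 2 / 2 ≤ Real.cos x := Real.one_sub_sq_div_two_le_cos
    have hc2 : 1 - ((n:ℝ) * x) ^ 2 / 2 ≤ Real.cos ((n:ℝ) * x) := Real.one_sub_sq_div_two_le_cos
    have hcos1 : Real.cos x ≤ 1 := Real.cos_le_one x
    have hcos2 : Real.cos ((n:ℝ) * x) ≤ 1 := Real.cos_le_one _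
    rw [h1]
    push_cast
    have key : ((n:ℝ) + 1) * Real.sin x - (Real.sin (n * x) * Real.cos x
        + Real.cos (n * x) * Real.sin x)
        = ((n:ℝ) * Real.sin x - Real.sin (n * x))
          + Real.sin (n * x) * (1 - Real.cos x)
          + Real.sin x * (1 - Real.cos (n * x)) := by ring
    rw [key]
    have hb1 : Real.sin ((n:ℝ) * x) * (1 - Real.cos x) ≤ ((n:ℝ) * x) * (x ^ 2 / 2) := by
      nlinarith [sq_nonneg x]
    have hb2 : Real.sin x * (1 - Real.cos ((n:ℝ) * x)) ≤ x * (((n:ℝ) * x) ^ 2 / 2) := by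
      rcases le_or_gt (Real.sin x) 0 with h | h
      · nlinarith [sq_nonneg ((n:ℝ) * x)]
      · nlinarith [sq_nonneg ((n:ℝ) * x)]
    have hx3 : 0 ≤ x ^ 3 := by positivity
    have hn0 : (0:ℝ) ≤ n := Nat.cast_nonneg n
    nlinarith [ih, hb1, hb2, mul_nonneg (mul_nonneg hn0 hn0) hx3, mul_nonneg hn0 hx3]

set_option maxHeartbeats 1000000 in
/-- For `μ > 1` there is a constant `C` (depending only on `μ`) such that for all `N ≥ 2`
and all integers `1 ≤ k ≤ N/2`, with `u_k^N = 3/(2 + μ sin²(kπ/N)/sin²(π/N))` and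
`v_k = 3/(2 + μk²)`, one has `|v_k - u_k^N|/(1 - v_k) ≤ C/N²`. -/
theorem uniform_prefactor_term_bound (μ : ℝ) (hμ : 1 < μ) :
    ∃ C : ℝ, ∀ N k : ℕ, 2 ≤ N → 1 ≤ k → (k : ℝ) ≤ N / 2 →
      |3 / (2 + μ * (k : ℝ) ^ 2)
          - 3 / (2 + μ * (Real.sin (k * Real.pi / N) ^ 2 / Real.sin (Real.pi / N) ^ 2))|
        / (1 - 3 / (2 + μ * (k : ℝ) ^ 2))
      ≤ C / (N : ℝ) ^ 2 := by
  refine ⟨3 * Real.pi ^ 6 / (8 * (μ - 1)), ?_⟩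
  intro N k hN hk hkN
  have hπ : (0:ℝ) < Real.pi := Real.pi_pos
  have hNpos : (0:ℝ) < N := by positivity
  have hN2 : (2:ℝ) ≤ N := by exact_mod_cast hN
  have hkpos : (0:ℝ) < k := by positivity
  have hk1 : (1:ℝ) ≤ k := by exact_mod_cast hk
  obtain ⟨θ, hθ⟩ : ∃ x : ℝ, x = Real.pi / N := ⟨_, rfl⟩
  rw [show (k:ℝ) * Real.pi / N = (k:ℝ) * θ by rw [hθ]; ring, ← hθ]
  have hθpos : 0 < θ := by rw [hθ]; positivity
  have hθle : θ ≤ Real.pi / 2 := by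
    rw [hθ, div_le_div_iff₀ hNpos (by norm_num : (0:ℝ) < 2)]
    nlinarith
  have hkθle : (k : ℝ) * θ ≤ Real.pi / 2 := by
    rw [hθ]
    calc (k:ℝ) * (Real.pi / N) ≤ ((N:ℝ) / 2) * (Real.pi / N) := by
          exact mul_le_mul_of_nonneg_right hkN (by positivity)
      _ = Real.pi / 2 := by field_simp
  have hkθpos : 0 < (k:ℝ) * θ := by positivity
  obtain ⟨a, ha⟩ : ∃ x : ℝ, x = Real.sin θ := ⟨_, rfl⟩
  obtain ⟨b, hb⟩ : ∃ x : ℝ, x = Real.sin ((k:ℝ) * θ) := ⟨_, rfl⟩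
  rw [← ha, ← hb]
  have hapos : 0 < a := by
    rw [ha]
    exact Real.sin_pos_of_pos_of_lt_pi hθpos (lt_of_le_of_lt hθle (by linarith))
  have hbpos : 0 < b := by
    rw [hb]
    exact Real.sin_pos_of_pos_of_lt_pi hkθpos (lt_of_le_of_lt hkθle (by linarith))
  have haθ : a ≤ θ := by rw [ha]; exact Real.sin_le hθpos.le
  have hJa : 2 / Real.pi * θ ≤ a := by rw [ha]; exact Real.mul_le_sin hθpos.le hθle
  have hJb : 2 / Real.pi * ((k:ℝ) * θ) ≤ b := by rw [hb]; exact Real.mul_le_sin hkθpos.le hkθle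
  have hba : b ≤ (k:ℝ) * a := by
    have h := aux_sin_nat_mul_le θ (ha ▸ le_of_lt hapos) k
    rw [← ha] at h
    calc b ≤ |Real.sin ((k:ℕ) * θ)| := by rw [hb]; push_cast; exact le_abs_self _
      _ ≤ (k:ℝ) * a := h
  have hdef : (k:ℝ) * a - b ≤ (k:ℝ) ^ 3 * θ ^ 3 := by
    have h := aux_defect θ hθpos.le k
    rw [← ha] at h
    rw [hb]; push_cast at h ⊢; linarith
  obtain ⟨s, hs⟩ : ∃ x : ℝ, x = b ^ 2 / a ^ 2 := ⟨_, rfl⟩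
  rw [← hs]
  have hspos : 0 < s := by rw [hs]; positivity
  have ha2pos : 0 < a ^ 2 := by positivity
  have hsle : s ≤ (k:ℝ) ^ 2 := by
    rw [hs, div_le_iff₀ ha2pos]
    nlinarith
  have hsge : 4 / Real.pi ^ 2 * (k:ℝ) ^ 2 ≤ s := by
    rw [hs, le_div_iff₀ ha2pos]
    have h3 : 0 ≤ 2 / Real.pi * ((k:ℝ) * θ) := by positivity
    have ha2 : a ^ 2 ≤ θ ^ 2 := pow_le_pow_left₀ hapos.le haθ 2
    have hb2 : (2 / Real.pi * ((k:ℝ) * θ)) ^ 2 ≤ b ^ 2 := pow_le_pow_left₀ h3 hJb 2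
    calc 4 / Real.pi ^ 2 * (k:ℝ) ^ 2 * a ^ 2 ≤ 4 / Real.pi ^ 2 * (k:ℝ) ^ 2 * θ ^ 2 := by
          exact mul_le_mul_of_nonneg_left ha2 (by positivity)
      _ = (2 / Real.pi * ((k:ℝ) * θ)) ^ 2 := by field_simp; ring
      _ ≤ b ^ 2 := hb2
  have hdiff : (k:ℝ) ^ 2 - s ≤ Real.pi ^ 2 / 2 * (k:ℝ) ^ 4 * θ ^ 2 := by
    have ha2 : 4 / Real.pi ^ 2 * θ ^ 2 ≤ a ^ 2 := by
      have h3 : 0 ≤ 2 / Real.pi * θ := by positivity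
      have := pow_le_pow_left₀ h3 hJa 2
      calc 4 / Real.pi ^ 2 * θ ^ 2 = (2 / Real.pi * θ) ^ 2 := by field_simp; ring
        _ ≤ a ^ 2 := this
    have hkaθ : (k:ℝ) * a ≤ (k:ℝ) * θ := mul_le_mul_of_nonneg_left haθ hkpos.le
    have hbθ : b ≤ (k:ℝ) * θ := hba.trans hkaθ
    have hnum : (k:ℝ) ^ 2 * a ^ 2 - b ^ 2 ≤ 2 * (k:ℝ) ^ 4 * θ ^ 4 := by
      have h1 : (k:ℝ) * a + b ≤ 2 * (k:ℝ) * θ := by linarith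
      have h2 : 0 ≤ (k:ℝ) * a + b := by positivity
      have h3 : 0 ≤ (k:ℝ) * a - b := sub_nonneg.mpr hba
      calc (k:ℝ) ^ 2 * a ^ 2 - b ^ 2 = ((k:ℝ) * a - b) * ((k:ℝ) * a + b) := by ring
        _ ≤ ((k:ℝ) ^ 3 * θ ^ 3) * (2 * (k:ℝ) * θ) := mul_le_mul hdef h1 h2 (by positivity)
        _ = 2 * (k:ℝ) ^ 4 * θ ^ 4 := by ring
    have hnum0 : 0 ≤ (k:ℝ) ^ 2 * a ^ 2 - b ^ 2 := by nlinarith [hba, hbpos.le, hkpos.le, hapos.le]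
    have heq : (k:ℝ) ^ 2 - s = ((k:ℝ) ^ 2 * a ^ 2 - b ^ 2) / a ^ 2 := by
      rw [hs]; field_simp
    rw [heq]
    calc ((k:ℝ) ^ 2 * a ^ 2 - b ^ 2) / a ^ 2
        ≤ (2 * (k:ℝ) ^ 4 * θ ^ 4) / (4 / Real.pi ^ 2 * θ ^ 2) :=
          div_le_div₀ (by positivity) hnum (by positivity) ha2
      _ = Real.pi ^ 2 / 2 * (k:ℝ) ^ 4 * θ ^ 2 := by field_simp; ring
  -- main estimate
  have hden1 : (0:ℝ) < 2 + μ * (k:ℝ) ^ 2 := by nlinarith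
  have hden2 : (0:ℝ) < 2 + μ * s := by nlinarith
  have hμk : (0:ℝ) < μ * (k:ℝ) ^ 2 - 1 := by nlinarith
  have hE : |3 / (2 + μ * (k:ℝ) ^ 2) - 3 / (2 + μ * s)| / (1 - 3 / (2 + μ * (k:ℝ) ^ 2))
      = 3 * μ * ((k:ℝ) ^ 2 - s) / ((2 + μ * s) * (μ * (k:ℝ) ^ 2 - 1)) := by
    have habs : |3 / (2 + μ * (k:ℝ) ^ 2) - 3 / (2 + μ * s)|
        = 3 * μ * ((k:ℝ) ^ 2 - s) / ((2 + μ * (k:ℝ) ^ 2) * (2 + μ * s)) := by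
      rw [abs_of_nonpos]
      · rw [neg_sub]
        rw [div_sub_div _ _ (ne_of_gt hden2) (ne_of_gt hden1),
          div_eq_div_iff (by positivity) (by positivity)]
        ring
      · rw [sub_nonpos, div_le_div_iff₀ hden1 hden2]
        nlinarith
    have hv : 1 - 3 / (2 + μ * (k:ℝ) ^ 2) = (μ * (k:ℝ) ^ 2 - 1) / (2 + μ * (k:ℝ) ^ 2) := by
      field_simp
      ring
    have h1 : (2 + μ * (k:ℝ) ^ 2) ≠ 0 := ne_of_gt hden1
    have h2 : (2 + μ * s) ≠ 0 := ne_of_gt hden2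
    have h3 : (μ * (k:ℝ) ^ 2 - 1) ≠ 0 := ne_of_gt hμk
    rw [habs, hv]
    field_simp
  rw [hE]
  have hDlow : 4 * μ * (μ - 1) / Real.pi ^ 2 * (k:ℝ) ^ 4 ≤ (2 + μ * s) * (μ * (k:ℝ) ^ 2 - 1) := by
    have h1 : (μ - 1) * (k:ℝ) ^ 2 ≤ μ * (k:ℝ) ^ 2 - 1 := by nlinarith
    have h2 : μ * (4 / Real.pi ^ 2 * (k:ℝ) ^ 2) ≤ 2 + μ * s := by nlinarith
    calc 4 * μ * (μ - 1) / Real.pi ^ 2 * (k:ℝ) ^ 4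
        = (μ * (4 / Real.pi ^ 2 * (k:ℝ) ^ 2)) * ((μ - 1) * (k:ℝ) ^ 2) := by ring
      _ ≤ (2 + μ * s) * (μ * (k:ℝ) ^ 2 - 1) :=
          mul_le_mul h2 h1 (by nlinarith) hden2.le
  have hθ2 : θ ^ 2 = Real.pi ^ 2 / (N:ℝ) ^ 2 := by rw [hθ]; field_simp
  have hNum : 3 * μ * ((k:ℝ) ^ 2 - s) ≤ 3 * μ * Real.pi ^ 4 / 2 * (k:ℝ) ^ 4 / (N:ℝ) ^ 2 := by
    have hd := hdiff
    rw [hθ2] at hd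
    have hμ0 : (0:ℝ) < μ := by linarith
    calc 3 * μ * ((k:ℝ) ^ 2 - s)
        ≤ 3 * μ * (Real.pi ^ 2 / 2 * (k:ℝ) ^ 4 * (Real.pi ^ 2 / (N:ℝ) ^ 2)) := by nlinarith
      _ = 3 * μ * Real.pi ^ 4 / 2 * (k:ℝ) ^ 4 / (N:ℝ) ^ 2 := by field_simp
  have hμ1 : (0:ℝ) < μ - 1 := by linarith
  have hμ0 : (0:ℝ) < μ := by linarith
  calc 3 * μ * ((k:ℝ) ^ 2 - s) / ((2 + μ * s) * (μ * (k:ℝ) ^ 2 - 1))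
      ≤ (3 * μ * Real.pi ^ 4 / 2 * (k:ℝ) ^ 4 / (N:ℝ) ^ 2)
          / (4 * μ * (μ - 1) / Real.pi ^ 2 * (k:ℝ) ^ 4) :=
        div_le_div₀ (by positivity) hNum (by positivity) hDlow
    _ = 3 * Real.pi ^ 6 / (8 * (μ - 1)) / (N:ℝ) ^ 2 := by
        field_simp
        ring
end
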